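/- arXiv:1612.05760 — 6 statements merged into one kernel-verified Lean document; each statement's English description precedes it below -/
import Mathlib

section
/- For every integer n ≥ 2, every real r ≥ 0, and every node u of the grid G, the sum of the weights d(u,v)^{−r} over all v ∈ G with v ≠ u is strictly greater than 1/8 times the sum of the weights d(u,v)^{−r} over all v in the ball B_u. (Equivalently, a node drawn in B_u with probability proportional to d(u,·)^{−r} lands in G with probability greater than 1/8.) -/
/-- Manhattan distance on the integer lattice ℤ². -/
def manhattan (u v : ℤ × ℤ) : ℤ := |u.1 - v.1| + |u.2 - v.2|

/-- The n×n grid G = {0,…,n−1} × {0,…,n−1}. -/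
noncomputable def grid (n : ℤ) : Finset (ℤ × ℤ) :=
  Finset.Icc (0 : ℤ) (n - 1) ×ˢ Finset.Icc (0 : ℤ) (n - 1)

/-- The ball B_u : points v with 1 ≤ d(u,v) ≤ 2(n−1). -/
noncomputable def ball (n : ℤ) (u : ℤ × ℤ) : Finset (ℤ × ℤ) :=
  (Finset.Icc (u.1 - 2 * (n - 1)) (u.1 + 2 * (n - 1)) ×ˢ
    Finset.Icc (u.2 - 2 * (n - 1)) (u.2 + 2 * (n - 1))).filter
    (fun v => 1 ≤ manhattan u v ∧ manhattan u v ≤ 2 * (n - 1))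

/-- The weight of a node v ≠ u: d(u,v)^{−r}. -/
noncomputable def wt (r : ℝ) (u v : ℤ × ℤ) : ℝ := (manhattan u v : ℝ) ^ (-r)

open Finset

/-- Weight as a function of the distance. -/
noncomputable def fw (r : ℝ) (j : ℤ) : ℝ := (j : ℝ) ^ (-r)

lemma fw_pos (r : ℝ) {j : ℤ} (hj : 1 ≤ j) : 0 < fw r j := by
  apply Real.rpow_pos_of_pos
  exact_mod_cast lt_of_lt_of_le zero_lt_one hj

lemma fw_anti (r : ℝ) (hr : 0 ≤ r) {i j : ℤ} (hi : 1 ≤ i) (hij : i ≤ j) :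
    fw r j ≤ fw r i := by
  unfold fw
  have h0 : (0:ℝ) < (i:ℝ) := by exact_mod_cast lt_of_lt_of_le zero_lt_one hi
  have h1 : (i:ℝ) ≤ (j:ℝ) := by exact_mod_cast hij
  rw [Real.rpow_neg (le_of_lt h0), Real.rpow_neg (le_of_lt (lt_of_lt_of_le h0 h1))]
  apply inv_anti₀ (Real.rpow_pos_of_pos h0 r)
  exact Real.rpow_le_rpow (le_of_lt h0) h1 hr

lemma telescope_aux (r : ℝ) (a : ℤ) : ∀ d : ℕ,
    ∑ k ∈ Icc a (a + d - 1), (fw r k - fw r (k+1)) = fw r a - fw r (a + d) := by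
  intro d
  induction d with
  | zero => rw [Finset.Icc_eq_empty (by omega)]; simp
  | succ d ih =>
      have hins : Icc a (a + (d+1:ℕ) - 1) = insert (a + d) (Icc a (a + d - 1)) := by
        ext x; simp [Finset.mem_Icc, Finset.mem_insert]; omega
      rw [hins, Finset.sum_insert (by simp [Finset.mem_Icc]), ih]
      push_cast
      ring_nf

lemma telescope (r : ℝ) (a b : ℤ) (hb : a ≤ b) :
    ∑ k ∈ Icc a (b-1), (fw r k - fw r (k+1)) = fw r a - fw r b := by
  obtain ⟨d, rfl⟩ : ∃ d : ℕ, b = a + d := ⟨(b-a).toNat, by omega⟩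
  exact telescope_aux r a d

/-- Layer-cake (Abel summation) formula for a sum of weights over a finite set,
organized by the cumulative counts of the distance function. -/
lemma layer_sum (r : ℝ) (K : ℤ) (S : Finset (ℤ×ℤ)) (d : ℤ×ℤ → ℤ)
    (hd : ∀ v ∈ S, 1 ≤ d v ∧ d v ≤ K) :
    ∑ v ∈ S, fw r (d v) =
      (∑ k ∈ Icc 1 (K-1), (fw r k - fw r (k+1)) * ((S.filter (fun v => d v ≤ k)).card : ℝ))
      + fw r K * S.card := by
  have h1 : ∀ v ∈ S, fw r (d v) =
      (∑ k ∈ Icc 1 (K-1), if d v ≤ k then (fw r k - fw r (k+1)) else 0) + fw r K := by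
    intro v hv
    have hdv1 := (hd v hv).1
    have hdv2 := (hd v hv).2
    rw [← Finset.sum_filter]
    have he : (Icc 1 (K-1)).filter (fun k => d v ≤ k) = Icc (d v) (K-1) := by
      ext x; simp only [Finset.mem_Icc, Finset.mem_filter]
      omega
    rw [he, telescope r (d v) K hdv2]
    ring
  rw [Finset.sum_congr rfl h1, Finset.sum_add_distrib, Finset.sum_const, Finset.sum_comm]
  congr 1
  · apply Finset.sum_congr rfl
    intro k _
    rw [Finset.sum_ite, Finset.sum_const, Finset.sum_const]
    simp [mul_comm]
  · simp [mul_comm]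

/-- The triangle of nonnegative pairs with sum in [1, k]. -/
noncomputable def tri (k : ℤ) : Finset (ℤ×ℤ) :=
  ((Icc (0:ℤ) k) ×ˢ (Icc (0:ℤ) k)).filter (fun p => 1 ≤ p.1 + p.2 ∧ p.1 + p.2 ≤ k)

lemma low_card (k : ℤ) (hk : 0 ≤ k) :
    2 * ((((Icc (0:ℤ) k) ×ˢ (Icc (0:ℤ) k)).filter (fun p => p.1 + p.2 ≤ k)).card : ℤ)
      = (k+1) * (k+2) := by
  set Sq := (Icc (0:ℤ) k) ×ˢ (Icc (0:ℤ) k) with hSq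
  have hsqcard : (Sq.card : ℤ) = (k+1) * (k+1) := by
    rw [hSq, Finset.card_product, Int.card_Icc]
    have : (k + 1 - 0).toNat = (k+1).toNat := by omega
    rw [this]
    push_cast [Int.toNat_of_nonneg (by omega : (0:ℤ) ≤ k + 1)]
    ring
  have hsplit := Finset.card_filter_add_card_filter_not
    (s := Sq) (p := fun p => p.1 + p.2 ≤ k)
  have himg : (Sq.filter (fun p => p.1 + p.2 ≤ k - 1)).image (fun p => (k - p.1, k - p.2))
      = Sq.filter (fun p => ¬ p.1 + p.2 ≤ k) := by
    ext p
    simp only [Finset.mem_image, Finset.mem_filter, hSq, Finset.mem_product, Finset.mem_Icc,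
      Prod.ext_iff, not_le]
    constructor
    · rintro ⟨q, ⟨⟨⟨h1,h2⟩,⟨h3,h4⟩⟩,h5⟩, h6, h7⟩
      omega
    · rintro ⟨⟨⟨h1,h2⟩,⟨h3,h4⟩⟩,h5⟩
      exact ⟨(k - p.1, k - p.2), by omega, by omega⟩
  have hinj : Function.Injective (fun p : ℤ×ℤ => ((k - p.1, k - p.2) : ℤ×ℤ)) := by
    intro p q h
    simp only [Prod.ext_iff] at h ⊢
    omega
  have hcardimg := Finset.card_image_of_injective
    (Sq.filter (fun p => p.1 + p.2 ≤ k - 1)) hinj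
  have hsplit2 := Finset.card_filter_add_card_filter_not
    (s := Sq.filter (fun p => p.1 + p.2 ≤ k)) (p := fun p => p.1 + p.2 ≤ k - 1)
  have heq1 : (Sq.filter (fun p => p.1 + p.2 ≤ k)).filter (fun p => p.1 + p.2 ≤ k - 1)
      = Sq.filter (fun p => p.1 + p.2 ≤ k - 1) := by
    rw [Finset.filter_filter]
    apply Finset.filter_congr
    intro p _
    constructor
    · rintro ⟨_, h⟩; exact h
    · intro h; exact ⟨by omega, h⟩
  have heq2 : (Sq.filter (fun p => p.1 + p.2 ≤ k)).filter (fun p => ¬ p.1 + p.2 ≤ k - 1)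
      = (Icc (0:ℤ) k).image (fun a => ((a, k - a) : ℤ×ℤ)) := by
    rw [Finset.filter_filter]
    ext p
    simp only [Finset.mem_image, Finset.mem_filter, hSq, Finset.mem_product, Finset.mem_Icc,
      Prod.ext_iff, not_le]
    constructor
    · rintro ⟨⟨⟨h1,h2⟩,⟨h3,h4⟩⟩,h5,h6⟩
      exact ⟨p.1, ⟨by omega, by omega⟩, by omega, by omega⟩
    · rintro ⟨a, ⟨h1,h2⟩, h3, h4⟩
      omega
  have hlayer : ((Icc (0:ℤ) k).image (fun a => ((a, k - a) : ℤ×ℤ))).card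
      = (Icc (0:ℤ) k).card := by
    apply Finset.card_image_of_injective
    intro a b h
    simpa using congrArg Prod.fst h
  have hicc : (((Icc (0:ℤ) k).card) : ℤ) = k + 1 := by
    rw [Int.card_Icc]; omega
  rw [← himg, hcardimg] at hsplit
  rw [heq1, heq2, hlayer] at hsplit2
  have h2L : 2 * ((Sq.filter (fun p => p.1 + p.2 ≤ k)).card)
      = Sq.card + (Icc (0:ℤ) k).card := by omega
  have hc := congrArg (Nat.cast : ℕ → ℤ) h2L
  push_cast at hc
  rw [hsqcard, hicc] at hc
  linarith

lemma tri_card (k : ℤ) (hk : 0 ≤ k) : 2 * ((tri k).card : ℤ) = k^2 + 3*k := by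
  have h0 : ((0,0) : ℤ×ℤ) ∈ ((Icc (0:ℤ) k) ×ˢ (Icc (0:ℤ) k)).filter
      (fun p => p.1 + p.2 ≤ k) := by
    simp [Finset.mem_product, Finset.mem_Icc]; omega
  have herase : tri k = (((Icc (0:ℤ) k) ×ˢ (Icc (0:ℤ) k)).filter
      (fun p => p.1 + p.2 ≤ k)).erase (0,0) := by
    ext p
    simp only [tri, Finset.mem_filter, Finset.mem_erase, Finset.mem_product, Finset.mem_Icc,
      Prod.ext_iff, ne_eq, not_and]
    constructor
    · rintro ⟨⟨⟨h1,h2⟩,⟨h3,h4⟩⟩,h5,h6⟩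
      exact ⟨fun ha hb => by omega, ⟨⟨h1,h2⟩,⟨h3,h4⟩⟩, h6⟩
    · rintro ⟨h0, ⟨⟨h1,h2⟩,⟨h3,h4⟩⟩, h5⟩
      have hne : p.1 ≠ 0 ∨ p.2 ≠ 0 := by tauto
      exact ⟨⟨⟨h1,h2⟩,⟨h3,h4⟩⟩, by omega, h5⟩
  have := low_card k hk
  rw [herase, Finset.card_erase_of_mem h0]
  have hpos : 1 ≤ (((Icc (0:ℤ) k) ×ˢ (Icc (0:ℤ) k)).filter (fun p => p.1 + p.2 ≤ k)).card :=
    Finset.card_pos.mpr ⟨(0,0), h0⟩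
  push_cast [Nat.cast_sub hpos]
  push_cast at this
  linarith

/-- Lower bound on the number of grid points (other than u) within distance s+t of u. -/
lemma grid_filter_card (n : ℤ) (hn : 2 ≤ n) (u : ℤ×ℤ) (hu : u ∈ grid n) (k s t : ℤ)
    (hs : 0 ≤ s) (ht : 0 ≤ t) (hsn : s ≤ n-1) (htn : t ≤ n-1) (hst : s + t = k) :
    (s+1)*(t+1) - 1 ≤ ((((grid n).erase u).filter (fun v => manhattan u v ≤ k)).card : ℤ) := by
  rw [grid, Finset.mem_product, Finset.mem_Icc, Finset.mem_Icc] at hu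
  obtain ⟨⟨hu1, hu2⟩, hu3, hu4⟩ := hu
  set Box : Finset (ℤ×ℤ) :=
    Icc (max 0 (u.1-s)) (min (n-1) (u.1+s)) ×ˢ Icc (max 0 (u.2-t)) (min (n-1) (u.2+t)) with hBox
  have hsub : Box.erase u ⊆ ((grid n).erase u).filter (fun v => manhattan u v ≤ k) := by
    intro v hv
    rw [Finset.mem_erase, hBox, Finset.mem_product, Finset.mem_Icc, Finset.mem_Icc] at hv
    obtain ⟨hne, ⟨hv1, hv2⟩, hv3, hv4⟩ := hv
    rw [Finset.mem_filter, Finset.mem_erase]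
    refine ⟨⟨hne, ?_⟩, ?_⟩
    · rw [grid, Finset.mem_product, Finset.mem_Icc, Finset.mem_Icc]
      omega
    · have h1 : |u.1 - v.1| ≤ s := abs_le.mpr ⟨by omega, by omega⟩
      have h2 : |u.2 - v.2| ≤ t := abs_le.mpr ⟨by omega, by omega⟩
      rw [manhattan]
      omega
  have hcard : (s+1)*(t+1) ≤ (Box.card : ℤ) := by
    rw [hBox, Finset.card_product, Int.card_Icc, Int.card_Icc]
    push_cast [Int.toNat_of_nonneg (by omega : (0:ℤ) ≤ min (n-1) (u.1+s) + 1 - max 0 (u.1-s)),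
      Int.toNat_of_nonneg (by omega : (0:ℤ) ≤ min (n-1) (u.2+t) + 1 - max 0 (u.2-t))]
    have h1 : s + 1 ≤ min (n-1) (u.1+s) + 1 - max 0 (u.1-s) := by omega
    have h2 : t + 1 ≤ min (n-1) (u.2+t) + 1 - max 0 (u.2-t) := by omega
    exact mul_le_mul h1 h2 (by omega) (by omega)
  have herase : (Box.card : ℤ) - 1 ≤ ((Box.erase u).card : ℤ) := by
    have := Finset.pred_card_le_card_erase (s := Box) (a := u)
    omega
  have hle := Finset.card_le_card hsub
  have hle' : ((Box.erase u).card : ℤ) ≤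
      ((((grid n).erase u).filter (fun v => manhattan u v ≤ k)).card : ℤ) :=
    Int.ofNat_le.mpr hle
  omega

/-- The ball sum is at most 4 times the triangle sum. -/
lemma ball_le_tri (n : ℤ) (r : ℝ) (u : ℤ×ℤ) :
    ∑ v ∈ ball n u, wt r u v ≤ 4 * ∑ p ∈ tri (2*(n-1)), fw r (p.1 + p.2) := by
  set K := 2*(n-1) with hK
  set φ : ℤ×ℤ → ℤ×ℤ := fun v => (|v.1 - u.1|, |v.2 - u.2|) with hφ
  have hman : ∀ v, manhattan u v = (φ v).1 + (φ v).2 := by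
    intro v
    rw [manhattan, hφ]
    simp only
    rw [abs_sub_comm u.1 v.1, abs_sub_comm u.2 v.2]
  have hmaps : ∀ v ∈ ball n u, φ v ∈ tri K := by
    intro v hv
    rw [ball, Finset.mem_filter] at hv
    obtain ⟨-, h1, h2⟩ := hv
    rw [hman] at h1 h2
    rw [tri, Finset.mem_filter, Finset.mem_product, Finset.mem_Icc, Finset.mem_Icc]
    have ha : 0 ≤ (φ v).1 := abs_nonneg _
    have hb : 0 ≤ (φ v).2 := abs_nonneg _
    refine ⟨⟨⟨ha, by omega⟩, ⟨hb, by omega⟩⟩, h1, h2⟩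
  rw [← Finset.sum_fiberwise_of_maps_to hmaps (wt r u)]
  have hbound : ∀ p ∈ tri K,
      ∑ v ∈ (ball n u).filter (fun v => φ v = p), wt r u v ≤ 4 * fw r (p.1 + p.2) := by
    intro p hp
    have hp1 : 1 ≤ p.1 + p.2 := by
      rw [tri, Finset.mem_filter] at hp; exact hp.2.1
    have hfw : 0 < fw r (p.1 + p.2) := fw_pos r hp1
    have hsum : ∑ v ∈ (ball n u).filter (fun v => φ v = p), wt r u v
        = ((ball n u).filter (fun v => φ v = p)).card * fw r (p.1 + p.2) := by
      rw [Finset.sum_congr rfl (fun v hv => ?_), Finset.sum_const, nsmul_eq_mul]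
      rw [Finset.mem_filter] at hv
      rw [wt, ← hv.2, ← hman v]
      rfl
    rw [hsum]
    have hfiber : ((ball n u).filter (fun v => φ v = p)).card ≤ 4 := by
      have hss : (ball n u).filter (fun v => φ v = p) ⊆
          {(u.1 + p.1, u.2 + p.2), (u.1 + p.1, u.2 - p.2),
           (u.1 - p.1, u.2 + p.2), (u.1 - p.1, u.2 - p.2)} := by
        intro v hv
        rw [Finset.mem_filter] at hv
        have h1 : |v.1 - u.1| = p.1 := congrArg Prod.fst hv.2
        have h2 : |v.2 - u.2| = p.2 := congrArg Prod.snd hv.2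
        rcases abs_cases (v.1 - u.1) with ⟨e1, -⟩ | ⟨e1, -⟩ <;>
          rcases abs_cases (v.2 - u.2) with ⟨e2, -⟩ | ⟨e2, -⟩ <;>
          simp only [Finset.mem_insert, Finset.mem_singleton, Prod.ext_iff] <;>
          omega
      calc ((ball n u).filter (fun v => φ v = p)).card
          ≤ _ := Finset.card_le_card hss
        _ ≤ 4 := by
            apply le_trans (Finset.card_insert_le _ _)
            have h2 : (({(u.1 + p.1, u.2 - p.2), (u.1 - p.1, u.2 + p.2),
                (u.1 - p.1, u.2 - p.2)} : Finset (ℤ×ℤ))).card ≤ 3 := by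
              apply le_trans (Finset.card_insert_le _ _)
              have h3 : (({(u.1 - p.1, u.2 + p.2), (u.1 - p.1, u.2 - p.2)} :
                  Finset (ℤ×ℤ))).card ≤ 2 := by
                apply le_trans (Finset.card_insert_le _ _)
                simp
              omega
            omega
    calc (((ball n u).filter (fun v => φ v = p)).card : ℝ) * fw r (p.1 + p.2)
        ≤ 4 * fw r (p.1 + p.2) := by
          apply mul_le_mul_of_nonneg_right _ hfw.le
          exact_mod_cast hfiber
      _ = 4 * fw r (p.1 + p.2) := rfl
  calc ∑ p ∈ tri K, ∑ v ∈ (ball n u).filter (fun v => φ v = p), wt r u v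
      ≤ ∑ p ∈ tri K, 4 * fw r (p.1 + p.2) := Finset.sum_le_sum hbound
    _ = 4 * ∑ p ∈ tri K, fw r (p.1 + p.2) := by rw [Finset.mul_sum]

/-- A node drawn in B_u with probability proportional to d(u,·)^{−r} lands in G
with probability greater than 1/8. -/
theorem weight_grid_gt_eighth_ball (n : ℤ) (hn : 2 ≤ n) (r : ℝ) (hr : 0 ≤ r)
    (u : ℤ × ℤ) (hu : u ∈ grid n) :
    (1 / 8) * ∑ v ∈ ball n u, wt r u v < ∑ v ∈ (grid n).erase u, wt r u v := by
  set K := 2*(n-1) with hK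
  have hK1 : 1 ≤ K := by omega
  set G := (grid n).erase u with hG
  have hu' := hu
  rw [grid, Finset.mem_product, Finset.mem_Icc, Finset.mem_Icc] at hu'
  obtain ⟨⟨hu1, hu2⟩, hu3, hu4⟩ := hu'
  -- distance bounds on G
  have hdG : ∀ v ∈ G, 1 ≤ manhattan u v ∧ manhattan u v ≤ K := by
    intro v hv
    rw [hG, Finset.mem_erase] at hv
    obtain ⟨hne, hvg⟩ := hv
    rw [grid, Finset.mem_product, Finset.mem_Icc, Finset.mem_Icc] at hvg
    obtain ⟨⟨hv1, hv2⟩, hv3, hv4⟩ := hvg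
    have hne' : v.1 ≠ u.1 ∨ v.2 ≠ u.2 := by
      by_contra hc
      push_neg at hc
      exact hne (Prod.ext hc.1 hc.2)
    have ha1 : 0 ≤ |u.1 - v.1| := abs_nonneg _
    have ha2 : 0 ≤ |u.2 - v.2| := abs_nonneg _
    have hb1 : |u.1 - v.1| ≤ n - 1 := abs_le.mpr ⟨by omega, by omega⟩
    have hb2 : |u.2 - v.2| ≤ n - 1 := abs_le.mpr ⟨by omega, by omega⟩
    constructor
    · rw [manhattan]
      rcases hne' with h | h
      · have : 1 ≤ |u.1 - v.1| := by
          rcases abs_cases (u.1 - v.1) with ⟨e, he⟩ | ⟨e, he⟩ <;> omega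
        omega
      · have : 1 ≤ |u.2 - v.2| := by
          rcases abs_cases (u.2 - v.2) with ⟨e, he⟩ | ⟨e, he⟩ <;> omega
        omega
    · rw [manhattan]; omega
  -- distance bounds on tri K
  have hdT : ∀ p ∈ tri K, 1 ≤ p.1 + p.2 ∧ p.1 + p.2 ≤ K := by
    intro p hp
    rw [tri, Finset.mem_filter] at hp
    exact hp.2
  -- rewrite grid sum with fw
  have hGsum : ∑ v ∈ G, wt r u v = ∑ v ∈ G, fw r (manhattan u v) :=
    Finset.sum_congr rfl (fun v _ => rfl)
  -- layer-cake formulas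
  have hT := layer_sum r K (tri K) (fun p => p.1 + p.2) hdT
  have hGl := layer_sum r K G (fun v => manhattan u v) hdG
  -- termwise comparison of cumulative counts
  have hterm : ∀ k ∈ Icc (1:ℤ) (K-1),
      (fw r k - fw r (k+1)) * (((tri K).filter (fun p => p.1 + p.2 ≤ k)).card : ℝ)
      ≤ 2 * ((fw r k - fw r (k+1)) * ((G.filter (fun v => manhattan u v ≤ k)).card : ℝ)) := by
    intro k hk
    rw [Finset.mem_Icc] at hk
    obtain ⟨hk1, hk2⟩ := hk
    have hcoef : 0 ≤ fw r k - fw r (k+1) :=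
      sub_nonneg.mpr (fw_anti r hr hk1 (by omega))
    -- card bound in ℤ
    obtain ⟨s, t, hts0, hts1, hts2, hts3⟩ :
        ∃ s t : ℤ, 0 ≤ t ∧ t ≤ s ∧ s + t = k ∧ s ≤ t + 1 := ⟨k - k/2, k/2, by omega⟩
    have hsn : s ≤ n - 1 := by omega
    have htn : t ≤ n - 1 := by omega
    have hB := grid_filter_card n hn u hu k s t (by omega) hts0 hsn htn hts2
    have hsubT : (tri K).filter (fun p => p.1 + p.2 ≤ k) ⊆ tri k := by
      intro p hp
      rw [Finset.mem_filter, tri, Finset.mem_filter, Finset.mem_product,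
        Finset.mem_Icc, Finset.mem_Icc] at hp
      obtain ⟨⟨⟨⟨h1,h2⟩,⟨h3,h4⟩⟩,h5,h6⟩, h7⟩ := hp
      rw [tri, Finset.mem_filter, Finset.mem_product, Finset.mem_Icc, Finset.mem_Icc]
      exact ⟨⟨⟨h1, by omega⟩, ⟨h3, by omega⟩⟩, h5, h7⟩
    have htk := tri_card k (by omega)
    have hAle : (((tri K).filter (fun p => p.1 + p.2 ≤ k)).card : ℤ) ≤ ((tri k).card : ℤ) :=
      Int.ofNat_le.mpr (Finset.card_le_card hsubT)
    have hquad : k^2 + 3*k ≤ 4*((s+1)*(t+1)) - 4 := by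
      have : s = t ∨ s = t + 1 := by omega
      rcases this with h | h <;> subst h <;> nlinarith
    have hcards : (((tri K).filter (fun p => p.1 + p.2 ≤ k)).card : ℤ)
        ≤ 2 * ((G.filter (fun v => manhattan u v ≤ k)).card : ℤ) := by
      rw [hG]
      omega
    have hcardsR : (((tri K).filter (fun p => p.1 + p.2 ≤ k)).card : ℝ)
        ≤ 2 * ((G.filter (fun v => manhattan u v ≤ k)).card : ℝ) := by
      exact_mod_cast hcards
    calc (fw r k - fw r (k+1)) * (((tri K).filter (fun p => p.1 + p.2 ≤ k)).card : ℝ)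
        ≤ (fw r k - fw r (k+1)) * (2 * ((G.filter (fun v => manhattan u v ≤ k)).card : ℝ)) :=
          mul_le_mul_of_nonneg_left hcardsR hcoef
      _ = 2 * ((fw r k - fw r (k+1)) * ((G.filter (fun v => manhattan u v ≤ k)).card : ℝ)) := by
          ring
  -- strict comparison of total counts
  have htop : ((tri K).card : ℝ) < 2 * (G.card : ℝ) := by
    have htK := tri_card K (by omega)
    have hB := grid_filter_card n hn u hu K (n-1) (n-1) (by omega) (by omega)
      (le_refl _) (le_refl _) (by omega)
    have hsub : G.filter (fun v => manhattan u v ≤ K) ⊆ G := Finset.filter_subset _ _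
    have hle : ((G.filter (fun v => manhattan u v ≤ K)).card : ℤ) ≤ (G.card : ℤ) :=
      Int.ofNat_le.mpr (Finset.card_le_card hsub)
    have hZ : ((tri K).card : ℤ) < 2 * (G.card : ℤ) := by
      rw [hG] at *
      nlinarith
    exact_mod_cast hZ
  -- combine: tri sum < 2 * grid sum
  have hfwK : 0 < fw r K := fw_pos r hK1
  have hsum1 : ∑ k ∈ Icc (1:ℤ) (K-1),
      (fw r k - fw r (k+1)) * (((tri K).filter (fun p => p.1 + p.2 ≤ k)).card : ℝ)
      ≤ ∑ k ∈ Icc (1:ℤ) (K-1),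
      2 * ((fw r k - fw r (k+1)) * ((G.filter (fun v => manhattan u v ≤ k)).card : ℝ)) :=
    Finset.sum_le_sum hterm
  have htop2 : fw r K * ((tri K).card : ℝ) < 2 * (fw r K * (G.card : ℝ)) := by
    have := mul_lt_mul_of_pos_left htop hfwK
    linarith
  have hmain : ∑ p ∈ tri K, fw r (p.1 + p.2) < 2 * ∑ v ∈ G, fw r (manhattan u v) := by
    beta_reduce at hT hGl
    rw [← Finset.mul_sum] at hsum1
    linarith [hsum1, htop2, hT, hGl]
  -- finish
  have hball := ball_le_tri n r u
  rw [hGsum]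
  rw [← hK] at hball
  linarith
end

section
/- For every integer n ≥ 2, every real r ≥ 0, and every node u of the grid G, the sum of d(u,v)^{−r} over v ∈ G with v ≠ u is at least the sum of d(u,v)^{−r} over v ∈ G_c with v ≠ u, where G_c is the n×n lattice having u as one of its corners. (The corner position of u is the worst case for the total weight.) -/
/-- G_c : the n×n lattice having u as a corner, {u + (a,b) : 0 ≤ a,b ≤ n−1}. -/
noncomputable def gridCorner (n : ℤ) (u : ℤ × ℤ) : Finset (ℤ × ℤ) :=
  Finset.Icc u (u + (n - 1, n - 1))

/-- fold a coordinate of the corner grid back into [0, n-1] without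
increasing the distance to c. -/
def fold (c t : ℤ) : ℤ := if t ≤ 2 * c then 2 * c - t else t - c

/-- The corner position of u is the worst case for the total weight. -/
theorem weight_gridCorner_le_grid (n : ℤ) (hn : 2 ≤ n) (r : ℝ) (hr : 0 ≤ r)
    (u : ℤ × ℤ) (hu : u ∈ grid n) :
    ∑ v ∈ (gridCorner n u).erase u, wt r u v ≤ ∑ v ∈ (grid n).erase u, wt r u v := by
  simp only [grid, Finset.mem_product, Finset.mem_Icc] at hu
  obtain ⟨⟨hu1, hu1'⟩, ⟨hu2, hu2'⟩⟩ := hu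
  set f : ℤ × ℤ → ℤ × ℤ := fun v => (fold u.1 v.1, fold u.2 v.2) with hf
  -- membership facts
  have hmemC : ∀ v ∈ (gridCorner n u).erase u,
      v ≠ u ∧ u.1 ≤ v.1 ∧ v.1 ≤ u.1 + (n-1) ∧ u.2 ≤ v.2 ∧ v.2 ≤ u.2 + (n-1) := by
    intro v hv
    rw [Finset.mem_erase, gridCorner, Finset.mem_Icc, Prod.le_def, Prod.le_def] at hv
    obtain ⟨hne, ⟨h1, h2⟩, h3, h4⟩ := hv
    exact ⟨hne, h1, h3, h2, h4⟩
  have hinj : ∀ c t₁ t₂ : ℤ, c ≤ t₁ → c ≤ t₂ → fold c t₁ = fold c t₂ → t₁ = t₂ := by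
    intro c t₁ t₂ h₁ h₂ h
    unfold fold at h
    split_ifs at h <;> omega
  have hfoldmem : ∀ c t : ℤ, 0 ≤ c → c ≤ n - 1 → c ≤ t → t ≤ c + (n-1) →
      0 ≤ fold c t ∧ fold c t ≤ n - 1 ∧ |c - fold c t| ≤ t - c := by
    intro c t hc hc' ht ht'
    unfold fold
    split_ifs <;> refine ⟨by omega, by omega, ?_⟩ <;> rw [abs_le] <;> omega
  -- distances from u are positive integers within the relevant sets
  have hdistpos : ∀ v : ℤ × ℤ, v ≠ u → (1:ℤ) ≤ manhattan u v := by
    intro v hv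
    unfold manhattan
    have : u.1 ≠ v.1 ∨ u.2 ≠ v.2 := by
      by_contra h
      push_neg at h
      exact hv (Prod.ext h.1.symm h.2.symm)
    rcases this with h | h
    · have h1 : 1 ≤ |u.1 - v.1| := Int.one_le_abs (by omega)
      have h2 : 0 ≤ |u.2 - v.2| := abs_nonneg _
      omega
    · have h1 : 1 ≤ |u.2 - v.2| := Int.one_le_abs (by omega)
      have h2 : 0 ≤ |u.1 - v.1| := abs_nonneg _
      omega
  -- f maps the erased corner grid into the erased grid
  have hfu : ∀ v ∈ (gridCorner n u).erase u, f v ∈ (grid n).erase u ∧ f v ≠ u ∧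
      manhattan u (f v) ≤ manhattan u v := by
    intro v hv
    obtain ⟨hne, h1, h2, h3, h4⟩ := hmemC v hv
    obtain ⟨a1, a2, a3⟩ := hfoldmem u.1 v.1 hu1 hu1' h1 h2
    obtain ⟨b1, b2, b3⟩ := hfoldmem u.2 v.2 hu2 hu2' h3 h4
    have hfvne : f v ≠ u := by
      intro h
      apply hne
      have e1 : fold u.1 v.1 = u.1 := congrArg Prod.fst h
      have e2 : fold u.2 v.2 = u.2 := congrArg Prod.snd h
      have fu1 : fold u.1 u.1 = u.1 := by unfold fold; split_ifs <;> omega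
      have fu2 : fold u.2 u.2 = u.2 := by unfold fold; split_ifs <;> omega
      exact Prod.ext (hinj u.1 v.1 u.1 h1 le_rfl (by rw [e1, fu1]))
        (hinj u.2 v.2 u.2 h3 le_rfl (by rw [e2, fu2]))
    refine ⟨?_, hfvne, ?_⟩
    · rw [Finset.mem_erase]
      refine ⟨hfvne, ?_⟩
      simp only [grid, Finset.mem_product, Finset.mem_Icc]
      exact ⟨⟨a1, a2⟩, b1, b2⟩
    · unfold manhattan
      have e1 : |u.1 - v.1| = -(u.1 - v.1) := abs_of_nonpos (by omega)
      have e2 : |u.2 - v.2| = -(u.2 - v.2) := abs_of_nonpos (by omega)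
      simp only [hf]
      omega
  -- pointwise: wt r u v ≤ wt r u (f v)
  have hpt : ∀ v ∈ (gridCorner n u).erase u, wt r u v ≤ wt r u (f v) := by
    intro v hv
    obtain ⟨_, hfvne, hle⟩ := hfu v hv
    have hne := (hmemC v hv).1
    have h1 : (1:ℤ) ≤ manhattan u (f v) := hdistpos _ hfvne
    have h2 : manhattan u (f v) ≤ manhattan u v := hle
    unfold wt
    apply Real.rpow_le_rpow_of_nonpos
    · exact_mod_cast lt_of_lt_of_le zero_lt_one (by exact_mod_cast h1)
    · exact_mod_cast h2
    · linarith
  calc ∑ v ∈ (gridCorner n u).erase u, wt r u v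
      ≤ ∑ v ∈ (gridCorner n u).erase u, wt r u (f v) :=
        Finset.sum_le_sum hpt
    _ = ∑ w ∈ ((gridCorner n u).erase u).image f, wt r u w := by
        rw [Finset.sum_image]
        intro x hx y hy hxy
        have hx' := hmemC x hx
        have hy' := hmemC y hy
        exact Prod.ext (hinj u.1 x.1 y.1 hx'.2.1 hy'.2.1 (congrArg Prod.fst hxy))
          (hinj u.2 x.2 y.2 hx'.2.2.2.1 hy'.2.2.2.1 (congrArg Prod.snd hxy))
    _ ≤ ∑ v ∈ (grid n).erase u, wt r u v := by
        apply Finset.sum_le_sum_of_subset_of_nonneg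
        · intro w hw
          rw [Finset.mem_image] at hw
          obtain ⟨v, hv, rfl⟩ := hw
          exact (hfu v hv).1
        · intro v _ _
          have hm : (0:ℤ) ≤ manhattan u v := add_nonneg (abs_nonneg _) (abs_nonneg _)
          exact Real.rpow_nonneg (by exact_mod_cast hm) _
end

section
/- For every integer n ≥ 1 and every node u of the grid G, there exists a bijection f from G onto G_c such that f(u) = u and d(u, f(v)) ≥ d(u,v) for all v ∈ G, where G_c is the n×n lattice having u as one of its corners. -/
/-- 1D shifting map. -/
def shift1 (n c x : ℤ) : ℤ := if c ≤ x then x else n - 1 - x + c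

lemma shift1_bijOn (n c : ℤ) (hc : 0 ≤ c) (hc' : c ≤ n - 1) :
    Set.BijOn (shift1 n c) (Set.Icc 0 (n - 1)) (Set.Icc c (c + (n - 1))) := by
  refine ⟨?_, ?_, ?_⟩
  · intro x hx
    simp only [Set.mem_Icc] at *
    unfold shift1; split <;> omega
  · intro x hx y hy hxy
    simp only [Set.mem_Icc] at *
    unfold shift1 at hxy
    split at hxy <;> split at hxy <;> omega
  · intro y hy
    simp only [Set.mem_Icc] at hy
    by_cases h : y ≤ n - 1
    · exact ⟨y, by simp only [Set.mem_Icc]; omega, by unfold shift1; split <;> omega⟩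
    · refine ⟨n - 1 - y + c, by simp only [Set.mem_Icc]; omega, ?_⟩
      unfold shift1; split <;> omega

/-- There is a bijection f from G onto G_c fixing u that does not decrease the
distance to u. -/
theorem exists_bijOn_grid_gridCorner (n : ℤ) (hn : 1 ≤ n) (u : ℤ × ℤ) (hu : u ∈ grid n) :
    ∃ f : ℤ × ℤ → ℤ × ℤ,
      Set.BijOn f (grid n : Set (ℤ × ℤ)) (gridCorner n u : Set (ℤ × ℤ)) ∧
      f u = u ∧
      ∀ v ∈ grid n, manhattan u v ≤ manhattan u (f v) := by
  simp only [grid, Finset.mem_product, Finset.mem_Icc] at hu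
  obtain ⟨⟨hu1, hu1'⟩, hu2, hu2'⟩ := hu
  refine ⟨fun v => (shift1 n u.1 v.1, shift1 n u.2 v.2), ?_, ?_, ?_⟩
  · have h1 := shift1_bijOn n u.1 hu1 hu1'
    have h2 := shift1_bijOn n u.2 hu2 hu2'
    have hset : (grid n : Set (ℤ × ℤ)) = Set.Icc 0 (n - 1) ×ˢ Set.Icc 0 (n - 1) := by
      simp [grid, Set.ext_iff, Set.mem_Icc]
    have hset2 : (gridCorner n u : Set (ℤ × ℤ)) =
        Set.Icc u.1 (u.1 + (n - 1)) ×ˢ Set.Icc u.2 (u.2 + (n - 1)) := by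
      ext v
      simp [gridCorner, Prod.le_def, Set.mem_Icc]
    rw [hset, hset2]
    exact h1.prodMap h2
  · simp [shift1]
  · intro v hv
    simp only [grid, Finset.mem_product, Finset.mem_Icc] at hv
    unfold manhattan shift1
    simp only
    split <;> split <;>
      rcases abs_cases (u.1 - v.1) with ⟨e1, _⟩ | ⟨e1, _⟩ <;>
      rcases abs_cases (u.2 - v.2) with ⟨e2, _⟩ | ⟨e2, _⟩ <;>
      rcases abs_cases (u.1 - (n - 1 - v.1 + u.1)) with ⟨e3, _⟩ | ⟨e3, _⟩ <;>
      rcases abs_cases (u.2 - (n - 1 - v.2 + u.2)) with ⟨e4, _⟩ | ⟨e4, _⟩ <;>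
      omega
end

section
/- For every integer n ≥ 2, every real r ≥ 0, and every u ∈ ℤ², the sum of d(u,v)^{−r} over all v in B_u \ H_u is strictly less than the sum of d(u,v)^{−r} over all v ∈ H_u with v ≠ u. -/
/-- H_u : the (2n−1)×(2n−1) lattice centered at u. -/
noncomputable def centeredSquare (n : ℤ) (u : ℤ × ℤ) : Finset (ℤ × ℤ) :=
  Finset.Icc (u - (n - 1, n - 1)) (u + (n - 1, n - 1))

/-- Folding map: pushes points outside the centered square back inside. -/
def phi (n : ℤ) (u v : ℤ × ℤ) : ℤ × ℤ :=
  if u.1 + n ≤ v.1 then (v.1 - (2 * n - 1), v.2)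
  else if v.1 ≤ u.1 - n then (v.1 + (2 * n - 1), v.2)
  else if u.2 + n ≤ v.2 then (v.1, v.2 - (2 * n - 1))
  else (v.1, v.2 + (2 * n - 1))

lemma mem_sdiff_iff' (n : ℤ) (u v : ℤ × ℤ) :
    v ∈ ball n u \ centeredSquare n u ↔
      (1 ≤ (u.1 - v.1).natAbs + (u.2 - v.2).natAbs ∧
        ((u.1 - v.1).natAbs : ℤ) + (u.2 - v.2).natAbs ≤ 2 * (n - 1)) ∧
      ((n : ℤ) ≤ (u.1 - v.1).natAbs ∨ (n : ℤ) ≤ (u.2 - v.2).natAbs) := by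
  simp only [ball, centeredSquare, manhattan, Finset.mem_sdiff, Finset.mem_filter,
    Finset.mem_product, Finset.mem_Icc, Prod.le_def, Prod.fst_sub, Prod.snd_sub,
    Prod.fst_add, Prod.snd_add, Int.abs_eq_natAbs]
  omega

lemma mem_square_erase_iff (n : ℤ) (u v : ℤ × ℤ) :
    v ∈ (centeredSquare n u).erase u ↔
      1 ≤ (u.1 - v.1).natAbs + (u.2 - v.2).natAbs ∧
      ((u.1 - v.1).natAbs : ℤ) ≤ n - 1 ∧ ((u.2 - v.2).natAbs : ℤ) ≤ n - 1 := by
  simp only [centeredSquare, Finset.mem_erase, Finset.mem_Icc, Prod.le_def, Prod.fst_sub,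
    Prod.snd_sub, Prod.fst_add, Prod.snd_add, Prod.ext_iff, ne_eq, not_and_or]
  omega

/-- Key properties of the folding map on B \ H. -/
lemma phi_spec (n : ℤ) (hn : 2 ≤ n) (u v : ℤ × ℤ)
    (hv : v ∈ ball n u \ centeredSquare n u) :
    (1 ≤ manhattan u (phi n u v)) ∧
    manhattan u (phi n u v) ≤ manhattan u v ∧
    phi n u v ∈ (centeredSquare n u).erase u ∧
    ((phi n u v).1 - u.1).natAbs ≠ ((phi n u v).2 - u.2).natAbs := by
  rw [mem_sdiff_iff'] at hv
  rw [mem_square_erase_iff]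
  simp only [manhattan, Int.abs_eq_natAbs, phi]
  split_ifs <;> simp only [] <;> omega

lemma phi_inj (n : ℤ) (hn : 2 ≤ n) (u : ℤ × ℤ) :
    ∀ v ∈ ball n u \ centeredSquare n u, ∀ v' ∈ ball n u \ centeredSquare n u,
      phi n u v = phi n u v' → v = v' := by
  intro v hv v' hv' h
  rw [mem_sdiff_iff'] at hv hv'
  simp only [phi, Prod.ext_iff] at h ⊢
  split_ifs at h <;> simp only [] at h <;> omega

lemma corner_not_mem (n : ℤ) (hn : 2 ≤ n) (u : ℤ × ℤ) :
    (u.1 + 1, u.2 + 1) ∉ (ball n u \ centeredSquare n u).image (phi n u) := by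
  intro h
  rw [Finset.mem_image] at h
  obtain ⟨v, hv, hphi⟩ := h
  have := (phi_spec n hn u v hv).2.2.2
  rw [hphi] at this
  simp at this

lemma corner_mem (n : ℤ) (hn : 2 ≤ n) (u : ℤ × ℤ) :
    (u.1 + 1, u.2 + 1) ∈ (centeredSquare n u).erase u := by
  rw [mem_square_erase_iff]
  simp only []
  omega

lemma wt_nonneg (r : ℝ) (u v : ℤ × ℤ) : 0 ≤ wt r u v := by
  unfold wt
  apply Real.rpow_nonneg
  have : (0:ℤ) ≤ manhattan u v := by unfold manhattan; positivity
  exact_mod_cast this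

lemma wt_pos (r : ℝ) (u v : ℤ × ℤ) (h : 1 ≤ manhattan u v) : 0 < wt r u v := by
  unfold wt
  apply Real.rpow_pos_of_pos
  exact_mod_cast lt_of_lt_of_le zero_lt_one h

lemma wt_mono (r : ℝ) (hr : 0 ≤ r) (u v w : ℤ × ℤ) (h1 : 1 ≤ manhattan u w)
    (h2 : manhattan u w ≤ manhattan u v) : wt r u v ≤ wt r u w := by
  unfold wt
  have hw : (0:ℝ) < (manhattan u w : ℝ) := by exact_mod_cast lt_of_lt_of_le zero_lt_one h1
  have hv : (0:ℝ) < (manhattan u v : ℝ) := lt_of_lt_of_le hw (by exact_mod_cast h2)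
  rw [Real.rpow_neg hw.le, Real.rpow_neg hv.le]
  apply inv_anti₀ (Real.rpow_pos_of_pos hw r)
  exact Real.rpow_le_rpow hw.le (by exact_mod_cast h2) hr

/-- The total weight of B_u \ H_u is strictly less than the total weight of H_u \ {u}. -/
theorem weight_ball_sdiff_lt_centeredSquare (n : ℤ) (hn : 2 ≤ n) (r : ℝ) (hr : 0 ≤ r)
    (u : ℤ × ℤ) :
    ∑ v ∈ ball n u \ centeredSquare n u, wt r u v <
      ∑ v ∈ (centeredSquare n u).erase u, wt r u v := by
  set s := ball n u \ centeredSquare n u with hs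
  calc ∑ v ∈ s, wt r u v ≤ ∑ v ∈ s, wt r u (phi n u v) := by
        apply Finset.sum_le_sum
        intro v hv
        obtain ⟨h1, h2, _, _⟩ := phi_spec n hn u v hv
        exact wt_mono r hr u v (phi n u v) h1 h2
    _ = ∑ w ∈ s.image (phi n u), wt r u w := (Finset.sum_image (phi_inj n hn u)).symm
    _ < ∑ v ∈ (centeredSquare n u).erase u, wt r u v := by
        apply Finset.sum_lt_sum_of_subset
          (i := ((u.1 + 1, u.2 + 1) : ℤ × ℤ))
        · intro w hw
          rw [Finset.mem_image] at hw
          obtain ⟨v, hv, hphi⟩ := hw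
          have := (phi_spec n hn u v hv).2.2.1
          rwa [hphi] at this
        · exact corner_mem n hn u
        · exact corner_not_mem n hn u
        · apply wt_pos
          simp only [manhattan, Int.abs_eq_natAbs]
          omega
        · intro j _ _
          exact wt_nonneg r u j
end

section
/- For every integer n ≥ 2 and every u ∈ ℤ², there exists an injective but not surjective map g from B_u \ H_u into H_u \ {u} such that d(u, g(v)) ≤ d(u,v) for all v ∈ B_u \ H_u (obtained by folding the corners of B_u back into H_u). -/
def foldG (n : ℤ) (u v : ℤ × ℤ) : ℤ × ℤ :=
  if n ≤ v.1 - u.1 then (u.1 + (2*n-1) - (v.1 - u.1), v.2)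
  else if v.1 - u.1 ≤ -n then (u.1 - (2*n-1) - (v.1 - u.1), v.2)
  else if n ≤ v.2 - u.2 then (v.1, u.2 + (2*n-1) - (v.2 - u.2))
  else (v.1, u.2 - (2*n-1) - (v.2 - u.2))

lemma mem_dom (n : ℤ) (u v : ℤ × ℤ) :
    v ∈ ball n u \ centeredSquare n u ↔
      (1 ≤ ((u.1 - v.1).natAbs : ℤ) + (u.2 - v.2).natAbs ∧
       ((u.1 - v.1).natAbs : ℤ) + (u.2 - v.2).natAbs ≤ 2*(n-1) ∧
       ¬(u.1 - (n-1) ≤ v.1 ∧ u.2 - (n-1) ≤ v.2 ∧ v.1 ≤ u.1 + (n-1) ∧ v.2 ≤ u.2 + (n-1))) := by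
  simp only [Finset.mem_sdiff, ball, centeredSquare, Finset.mem_filter, Finset.mem_product,
    Finset.mem_Icc, manhattan, Prod.le_def, Prod.fst_sub, Prod.snd_sub, Prod.fst_add,
    Prod.snd_add, Int.abs_eq_natAbs]
  constructor <;> intro h <;> omega

lemma mem_cod (n : ℤ) (u w : ℤ × ℤ) :
    w ∈ (centeredSquare n u).erase u ↔
      (w ≠ u ∧ u.1 - (n-1) ≤ w.1 ∧ u.2 - (n-1) ≤ w.2 ∧ w.1 ≤ u.1 + (n-1) ∧ w.2 ≤ u.2 + (n-1)) := by
  simp only [Finset.mem_erase, centeredSquare, Finset.mem_Icc, Prod.le_def, Prod.fst_sub,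
    Prod.snd_sub, Prod.fst_add, Prod.snd_add]
  tauto

/-- Folding the corners of B_u back into H_u gives an injective, non-surjective,
distance-nonincreasing map from B_u \ H_u into H_u \ {u}. -/
theorem exists_strict_injOn_fold (n : ℤ) (hn : 2 ≤ n) (u : ℤ × ℤ) :
    ∃ g : ℤ × ℤ → ℤ × ℤ,
      Set.MapsTo g (↑(ball n u \ centeredSquare n u)) (↑((centeredSquare n u).erase u)) ∧
      Set.InjOn g (↑(ball n u \ centeredSquare n u)) ∧
      ¬ Set.SurjOn g (↑(ball n u \ centeredSquare n u)) (↑((centeredSquare n u).erase u)) ∧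
      ∀ v ∈ ball n u \ centeredSquare n u, manhattan u (g v) ≤ manhattan u v := by
  refine ⟨foldG n u, ?_, ?_, ?_, ?_⟩
  · intro v hv
    rw [Finset.mem_coe, mem_dom] at hv
    rw [Finset.mem_coe, mem_cod]
    obtain ⟨h1, h2, h3⟩ := hv
    unfold foldG
    split_ifs <;>
      simp only [Prod.ext_iff, ne_eq, not_and] <;>
      refine ⟨fun hh => ?_, by omega, by omega, by omega, by omega⟩ <;> omega
  · intro v hv w hw hgvw
    rw [Finset.mem_coe, mem_dom] at hv hw
    obtain ⟨a1, a2, a3⟩ := hv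
    obtain ⟨b1, b2, b3⟩ := hw
    unfold foldG at hgvw
    split_ifs at hgvw <;> rw [Prod.ext_iff] at hgvw ⊢ <;> obtain ⟨p, q⟩ := hgvw <;>
      constructor <;> omega
  · intro hsurj
    have hmem : (u.1 + 1, u.2 + 1) ∈ ((centeredSquare n u).erase u : Finset (ℤ×ℤ)) := by
      rw [mem_cod]; refine ⟨?_, by omega, by omega, by omega, by omega⟩
      simp only [Prod.ext_iff, ne_eq, not_and]; intro; omega
    obtain ⟨v, hv, hgv⟩ := hsurj (Finset.mem_coe.2 hmem)
    rw [Finset.mem_coe, mem_dom] at hv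
    obtain ⟨a1, a2, a3⟩ := hv
    unfold foldG at hgv
    split_ifs at hgv <;> rw [Prod.ext_iff] at hgv <;> obtain ⟨p, q⟩ := hgv <;> omega
  · intro v hv
    rw [mem_dom] at hv
    obtain ⟨a1, a2, a3⟩ := hv
    unfold manhattan foldG
    simp only [Int.abs_eq_natAbs]
    split_ifs <;> simp only <;> omega
end

section
/- β-dimensional grid bound: for every integer β ≥ 1, every integer n ≥ 2, every real r ≥ 0, and every node u of the β-dimensional grid G = {0,…,n−1}^β, the sum of d(u,v)^{−r} over v ∈ G with v ≠ u is at least 2^{−β} times the sum of d(u,v)^{−r} over v ∈ H_u with v ≠ u, where H_u is the hypercube lattice of side 2n−1 centered at u. -/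
/-- Manhattan distance on the integer lattice ℤ^β. -/
def manhattanDim {β : ℕ} (u v : Fin β → ℤ) : ℤ := ∑ i, |u i - v i|

/-- The β-dimensional grid G = {0,…,n−1}^β. -/
noncomputable def gridDim (β : ℕ) (n : ℤ) : Finset (Fin β → ℤ) :=
  Fintype.piFinset (fun _ => Finset.Icc (0 : ℤ) (n - 1))

/-- H_u : the hypercube lattice of side 2n−1 centered at u. -/
noncomputable def hypercube (β : ℕ) (n : ℤ) (u : Fin β → ℤ) : Finset (Fin β → ℤ) :=
  Fintype.piFinset (fun i => Finset.Icc (u i - (n - 1)) (u i + (n - 1)))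

/-- The weight of a node v ≠ u: d(u,v)^{−r}. -/
noncomputable def wtDim {β : ℕ} (r : ℝ) (u v : Fin β → ℤ) : ℝ :=
  (manhattanDim u v : ℝ) ^ (-r)

namespace WeightAux

/-- One-dimensional folding of `[ui, ui + n - 1]` into `[0, n-1]`. -/
def sig (n ui y : ℤ) : ℤ := if y ≤ n - 1 then y else ui + n - 1 - y

/-- The folding map from the hypercube into the grid. -/
def fold {β : ℕ} (n : ℤ) (u v : Fin β → ℤ) : Fin β → ℤ :=
  fun i => sig n (u i) (u i + |v i - u i|)

/-- Inverse coordinate distance read off from the target point. -/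
def ee (n ui ti : ℤ) : ℤ := if ui ≤ ti then ti - ui else n - 1 - ti

section coord
variable {n ui d t : ℤ}

lemma sig_mem (h0 : 0 ≤ ui) (h1 : ui ≤ n - 1) (hd0 : 0 ≤ d) (hd1 : d ≤ n - 1) :
    0 ≤ sig n ui (ui + d) ∧ sig n ui (ui + d) ≤ n - 1 := by
  unfold sig; split_ifs <;> omega

lemma sig_dist (h0 : 0 ≤ ui) (h1 : ui ≤ n - 1) (hd0 : 0 ≤ d) (hd1 : d ≤ n - 1) :
    |sig n ui (ui + d) - ui| ≤ d := by
  rw [abs_le]; unfold sig; constructor <;> (split_ifs <;> omega)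

lemma sig_ne (h0 : 0 ≤ ui) (h1 : ui ≤ n - 1) (hd1 : d ≤ n - 1) (hd : 1 ≤ d) :
    sig n ui (ui + d) ≠ ui := by
  unfold sig; split_ifs <;> omega

lemma sig_inv (h0 : 0 ≤ ui) (h1 : ui ≤ n - 1) (hd0 : 0 ≤ d) (hd1 : d ≤ n - 1)
    (ht : sig n ui (ui + d) = t) : d = ee n ui t := by
  unfold sig at ht; unfold ee; split_ifs at ht ⊢ <;> omega

end coord

lemma manhattan_nonneg {β : ℕ} (u v : Fin β → ℤ) : 0 ≤ manhattanDim u v :=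
  Finset.sum_nonneg fun i _ => abs_nonneg _

lemma manhattan_pos {β : ℕ} {u v : Fin β → ℤ} (h : v ≠ u) : 1 ≤ manhattanDim u v := by
  rcases (manhattan_nonneg u v).lt_or_eq with hlt | heq
  · omega
  · exfalso; apply h; funext i
    have := (Finset.sum_eq_zero_iff_of_nonneg (fun i _ => abs_nonneg (u i - v i))).1
      heq.symm i (Finset.mem_univ i)
    have := abs_eq_zero.1 this
    omega

end WeightAux

open WeightAux in
/-- β-dimensional grid bound: the total weight of G \ {u} is at least 2^{−β}
times the total weight of H_u \ {u}. -/
theorem weight_gridDim_ge_hypercube (β : ℕ) (hβ : 1 ≤ β) (n : ℤ) (hn : 2 ≤ n)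
    (r : ℝ) (hr : 0 ≤ r) (u : Fin β → ℤ) (hu : u ∈ gridDim β n) :
    (1 / 2 ^ β) * ∑ v ∈ (hypercube β n u).erase u, wtDim r u v ≤
      ∑ v ∈ (gridDim β n).erase u, wtDim r u v := by
  have hu' : ∀ i, 0 ≤ u i ∧ u i ≤ n - 1 := by
    intro i
    have := (Fintype.mem_piFinset.1 hu) i
    rw [Finset.mem_Icc] at this
    exact this
  -- facts about members of the erased hypercube
  have hmem : ∀ v ∈ (hypercube β n u).erase u, ∀ i,
      0 ≤ |v i - u i| ∧ |v i - u i| ≤ n - 1 := by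
    intro v hv i
    have := (Fintype.mem_piFinset.1 (Finset.mem_of_mem_erase hv)) i
    rw [Finset.mem_Icc] at this
    constructor
    · exact abs_nonneg _
    · rw [abs_le]; omega
  -- the fold maps into the erased grid
  have hmaps : ∀ v ∈ (hypercube β n u).erase u, fold n u v ∈ (gridDim β n).erase u := by
    intro v hv
    have hne : v ≠ u := Finset.ne_of_mem_erase hv
    rw [Finset.mem_erase]
    constructor
    · intro hfold
      obtain ⟨i, hi⟩ : ∃ i, v i ≠ u i := by
        by_contra hc; push_neg at hc; exact hne (funext hc)
      have h1 : 1 ≤ |v i - u i| := by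
        rcases abs_cases (v i - u i) with ⟨h, _⟩ | ⟨h, _⟩ <;> omega
      exact sig_ne (hu' i).1 (hu' i).2 (hmem v hv i).2 h1 (congrFun hfold i)
    · exact Fintype.mem_piFinset.2 fun i => Finset.mem_Icc.2
        (sig_mem (hu' i).1 (hu' i).2 (hmem v hv i).1 (hmem v hv i).2)
  -- weight does not decrease under folding
  have hwt : ∀ v ∈ (hypercube β n u).erase u, wtDim r u v ≤ wtDim r u (fold n u v) := by
    intro v hv
    have hne : v ≠ u := Finset.ne_of_mem_erase hv
    have hfne : fold n u v ≠ u := (Finset.mem_erase.1 (hmaps v hv)).1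
    have hd1 : 1 ≤ manhattanDim u (fold n u v) := manhattan_pos hfne
    have hdle : manhattanDim u (fold n u v) ≤ manhattanDim u v := by
      unfold manhattanDim
      apply Finset.sum_le_sum
      intro i _
      rw [abs_sub_comm (u i) (fold n u v i), abs_sub_comm (u i) (v i)]
      exact sig_dist (hu' i).1 (hu' i).2 (hmem v hv i).1 (hmem v hv i).2
    unfold wtDim
    apply Real.rpow_le_rpow_of_nonpos
    · exact_mod_cast lt_of_lt_of_le one_pos (by exact_mod_cast hd1)
    · exact_mod_cast hdle
    · linarith
  -- fiber cardinality bound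
  have hcard : ∀ t, (((hypercube β n u).erase u).filter (fun v => fold n u v = t)).card
      ≤ 2 ^ β := by
    intro t
    have hsub : ((hypercube β n u).erase u).filter (fun v => fold n u v = t) ⊆
        Fintype.piFinset (fun i => ({u i - ee n (u i) (t i), u i + ee n (u i) (t i)} : Finset ℤ)) := by
      intro v hv
      rw [Finset.mem_filter] at hv
      obtain ⟨hv1, hv2⟩ := hv
      rw [Fintype.mem_piFinset]
      intro i
      have he : |v i - u i| = ee n (u i) (t i) :=
        sig_inv (hu' i).1 (hu' i).2 (hmem v hv1 i).1 (hmem v hv1 i).2 (congrFun hv2 i)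
      simp only [Finset.mem_insert, Finset.mem_singleton]
      rcases abs_cases (v i - u i) with ⟨h, _⟩ | ⟨h, _⟩ <;> omega
    calc (((hypercube β n u).erase u).filter (fun v => fold n u v = t)).card
        ≤ (Fintype.piFinset (fun i => ({u i - ee n (u i) (t i), u i + ee n (u i) (t i)} : Finset ℤ))).card :=
          Finset.card_le_card hsub
      _ = ∏ i : Fin β, ({u i - ee n (u i) (t i), u i + ee n (u i) (t i)} : Finset ℤ).card :=
          Fintype.card_piFinset _
      _ ≤ ∏ _i : Fin β, 2 :=
          Finset.prod_le_prod' (fun i _ => (Finset.card_insert_le _ _).trans (by simp))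
      _ = 2 ^ β := by simp
  -- weights are nonnegative
  have hwt0 : ∀ v : Fin β → ℤ, 0 ≤ wtDim r u v := by
    intro v
    exact Real.rpow_nonneg (by exact_mod_cast manhattan_nonneg u v) _
  rw [one_div, inv_mul_le_iff₀ (by positivity)]
  calc ∑ v ∈ (hypercube β n u).erase u, wtDim r u v
      ≤ ∑ v ∈ (hypercube β n u).erase u, wtDim r u (fold n u v) := Finset.sum_le_sum hwt
    _ = ∑ t ∈ (gridDim β n).erase u,
          ∑ v ∈ ((hypercube β n u).erase u).filter (fun v => fold n u v = t),
            wtDim r u (fold n u v) :=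
        (Finset.sum_fiberwise_of_maps_to hmaps _).symm
    _ ≤ ∑ t ∈ (gridDim β n).erase u, 2 ^ β * wtDim r u t := by
        apply Finset.sum_le_sum
        intro t ht
        have : ∑ v ∈ ((hypercube β n u).erase u).filter (fun v => fold n u v = t),
            wtDim r u (fold n u v) =
            ∑ v ∈ ((hypercube β n u).erase u).filter (fun v => fold n u v = t),
            wtDim r u t := by
          apply Finset.sum_congr rfl
          intro v hv
          rw [(Finset.mem_filter.1 hv).2]
        rw [this, Finset.sum_const, nsmul_eq_mul]
        apply mul_le_mul_of_nonneg_right _ (hwt0 t)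
        calc ((((hypercube β n u).erase u).filter (fun v => fold n u v = t)).card : ℝ)
            ≤ ((2 ^ β : ℕ) : ℝ) := by exact_mod_cast hcard t
          _ = 2 ^ β := by push_cast; ring
    _ = 2 ^ β * ∑ v ∈ (gridDim β n).erase u, wtDim r u v := by rw [Finset.mul_sum]
end
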